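/- Let β ∈ C^N and k ∈ Z^N with k+β ≠ 0, N = 2n, 1 ≤ p ≤ n. Every element of (k+β) ∧ Λ^{p-1}C^N that lies in the kernel of the contraction map θ_p : Λ^p C^N → Λ^{p-2}C^N is of the form (k+β)(\overline{k+β})^T w for some w ∈ ker θ_p. (For p=1, ker θ_1 means all of C^N.) In other words, W^{k,β}(V(ω_p)) = W_min^{k,β}(V(ω_p)). -/

import Mathlib

open Matrix

/-- The standard symplectic matrix `J` for `N = 2n`. -/
noncomputable def Jmat (n : ℕ) : Matrix (Fin n ⊕ Fin n) (Fin n ⊕ Fin n) ℂ :=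
  Matrix.fromBlocks 0 1 (-1) 0

/-- The wedge `v_1 ∧ ... ∧ v_p` inside the exterior algebra. -/
noncomputable def wedge (n : ℕ) {p : ℕ} (v : Fin p → (Fin n ⊕ Fin n → ℂ)) :
    ExteriorAlgebra ℂ (Fin n ⊕ Fin n → ℂ) :=
  ((List.ofFn v).map (ExteriorAlgebra.ι ℂ)).prod

/-- The contraction `θ_p(v_1 ∧ ... ∧ v_p) = Σ_{i<j} (-1)^{i+j-1} (v̄_i|v_j)
v_1 ∧ ... ∧ v̂_i ∧ ... ∧ v̂_j ∧ ... ∧ v_p` (0-based indices; for `p = 1` this is `0`, so its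
kernel is all of `ℂ^N`). -/
noncomputable def contraction (n : ℕ) {p : ℕ} (v : Fin p → (Fin n ⊕ Fin n → ℂ)) :
    ExteriorAlgebra ℂ (Fin n ⊕ Fin n → ℂ) :=
  ∑ i : Fin p, ∑ j : Fin p,
    if i < j then
      ((-1 : ℂ) ^ (i.val + j.val + 1) * ((Jmat n).mulVec (v i) ⬝ᵥ v j)) •
        ((((List.ofFn v).map (ExteriorAlgebra.ι ℂ)).eraseIdx j.val).eraseIdx i.val).prod
    else 0

namespace WWaux

theorem eraseIdx_map {α β : Type*} (f : α → β) : ∀ (l : List α) (i : ℕ),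
    (l.map f).eraseIdx i = (l.eraseIdx i).map f := by
  intro l
  induction l with
  | nil => intro i; simp
  | cons a l ih =>
    intro i
    cases i with
    | zero => simp
    | succ j => simp [ih j]

theorem eraseIdx_eraseIdx {α : Type*} : ∀ (l : List α) (i j : ℕ), j ≤ i →
    (l.eraseIdx j).eraseIdx i = (l.eraseIdx (i+1)).eraseIdx j := by
  intro l
  induction l with
  | nil => intro i j _; simp
  | cons a l ih =>
    intro i j hji
    cases j with
    | zero => simp
    | succ j' =>
      obtain ⟨i', rfl⟩ : ∃ i', i = i' + 1 := ⟨i - 1, by omega⟩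
      simp only [List.eraseIdx_cons_succ, List.cons.injEq, true_and]
      exact ih i' j' (by omega)

theorem getD_eraseIdx_of_lt {α : Type*} (l : List α) (d : α) (i j : ℕ) (h : j < i) :
    (l.eraseIdx i).getD j d = l.getD j d := by
  rw [List.getD_eq_getElem?_getD, List.getD_eq_getElem?_getD, List.getElem?_eraseIdx_of_lt h]

theorem getD_eraseIdx_of_ge {α : Type*} (l : List α) (d : α) (i j : ℕ) (h : i ≤ j) :
    (l.eraseIdx i).getD j d = l.getD (j+1) d := by
  rw [List.getD_eq_getElem?_getD, List.getD_eq_getElem?_getD, List.getElem?_eraseIdx_of_ge h]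

theorem Jmat_transpose (n : ℕ) : (Jmat n)ᵀ = -(Jmat n) := by
  simp [Jmat, Matrix.fromBlocks_transpose, Matrix.fromBlocks_neg]

theorem Jmat_mul_Jmat (n : ℕ) : Jmat n * Jmat n = -1 := by
  have h1 : (-1 : Matrix (Fin n ⊕ Fin n) (Fin n ⊕ Fin n) ℂ) = -(Matrix.fromBlocks 1 0 0 1) := by
    rw [Matrix.fromBlocks_one]
  simp only [Jmat, Matrix.fromBlocks_multiply, h1, Matrix.fromBlocks_neg]
  norm_num

theorem Jskew {n : ℕ} (u v : Fin n ⊕ Fin n → ℂ) :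
    (Jmat n).mulVec u ⬝ᵥ v = -((Jmat n).mulVec v ⬝ᵥ u) := by
  rw [dotProduct_comm, Matrix.dotProduct_mulVec, ← Matrix.mulVec_transpose,
    Jmat_transpose, Matrix.neg_mulVec, neg_dotProduct]

theorem Jinj {n : ℕ} {u : Fin n ⊕ Fin n → ℂ} (h : (Jmat n).mulVec u = 0) : u = 0 := by
  have h2 : (Jmat n).mulVec ((Jmat n).mulVec u) = -u := by
    rw [Matrix.mulVec_mulVec, Jmat_mul_Jmat, Matrix.neg_mulVec, Matrix.one_mulVec]
  rw [h, Matrix.mulVec_zero] at h2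
  simpa using h2.symm

theorem vecMulVec_mulVec {n : ℕ} (a c u : Fin n ⊕ Fin n → ℂ) :
    (Matrix.vecMulVec a c).mulVec u = (c ⬝ᵥ u) • a := by
  funext i
  simp only [Matrix.mulVec, Matrix.vecMulVec_apply, dotProduct, Pi.smul_apply,
    smul_eq_mul, Finset.sum_mul]
  exact Finset.sum_congr rfl fun j _ => by ring


variable {n : ℕ}

abbrev Vn (n : ℕ) := Fin n ⊕ Fin n → ℂ

/-- The functional `ω(u,·) = (Ju)ᵀ·`. -/
noncomputable def om (n : ℕ) (u : Vn n) : Module.Dual ℂ (Vn n) where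
  toFun v := (Jmat n).mulVec u ⬝ᵥ v
  map_add' a b := dotProduct_add _ a b
  map_smul' c a := by simp [dotProduct_smul]

@[simp] lemma om_apply (u v : Vn n) : om n u v = (Jmat n).mulVec u ⬝ᵥ v := rfl

lemma om_skew (u v : Vn n) : om n u v = -(om n v u) := Jskew u v

lemma om_self (u : Vn n) : om n u u = 0 := by
  have h := om_skew u u
  linear_combination h / 2

noncomputable def fr (n : ℕ) (r : Fin n ⊕ Fin n) : Module.Dual ℂ (Vn n) :=
  (LinearMap.proj r).comp (Matrix.mulVecLin (Jmat n))

noncomputable def gr (n : ℕ) (r : Fin n ⊕ Fin n) : Module.Dual ℂ (Vn n) :=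
  LinearMap.proj r

@[simp] lemma fr_apply (r : Fin n ⊕ Fin n) (u : Vn n) : fr n r u = (Jmat n).mulVec u r := rfl
@[simp] lemma gr_apply (r : Fin n ⊕ Fin n) (u : Vn n) : gr n r u = u r := rfl

/-- Contraction with the symplectic bivector, as a globally defined operator. -/
noncomputable def Theta (n : ℕ) : ExteriorAlgebra ℂ (Vn n) →ₗ[ℂ] ExteriorAlgebra ℂ (Vn n) :=
  -(2⁻¹ : ℂ) • ∑ r : Fin n ⊕ Fin n,
    (CliffordAlgebra.contractLeft (fr n r)) ∘ₗ (CliffordAlgebra.contractLeft (gr n r))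

noncomputable def Pl (n : ℕ) (l : List (Vn n)) : ExteriorAlgebra ℂ (Vn n) :=
  (l.map (ExteriorAlgebra.ι ℂ)).prod

@[simp] lemma Pl_nil : Pl n [] = 1 := rfl

@[simp] lemma Pl_cons (a : Vn n) (l : List (Vn n)) :
    Pl n (a :: l) = ExteriorAlgebra.ι ℂ a * Pl n l := by simp [Pl]

theorem contractLeft_Pl (f : Module.Dual ℂ (Vn n)) : ∀ (l : List (Vn n)),
    CliffordAlgebra.contractLeft f (Pl n l)
      = ∑ i ∈ Finset.range l.length, ((-1:ℂ)^i * f (l.getD i 0)) • Pl n (l.eraseIdx i) := by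
  intro l
  induction l with
  | nil => simp [CliffordAlgebra.contractLeft_one]
  | cons u l ih =>
    rw [Pl_cons, CliffordAlgebra.contractLeft_ι_mul, ih, List.length_cons,
      Finset.sum_range_succ']
    simp only [List.getD_cons_succ, List.getD_cons_zero, List.eraseIdx_cons_succ,
      List.eraseIdx_cons_zero, pow_zero, one_mul, pow_succ, Pl_cons]
    rw [Finset.mul_sum, sub_eq_add_neg, ← Finset.sum_neg_distrib, add_comm]
    congr 1
    refine Finset.sum_congr rfl fun i _ => ?_
    rw [mul_smul_comm, ← neg_smul]
    congr 1
    ring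


theorem Theta_Pl (l : List (Vn n)) :
    Theta n (Pl n l) = ∑ j ∈ Finset.range l.length, ∑ i ∈ Finset.range j,
      ((-1:ℂ)^(i+j+1) * om n (l.getD i 0) (l.getD j 0)) • Pl n ((l.eraseIdx j).eraseIdx i) := by
  classical
  have hcl : ∀ r, ((CliffordAlgebra.contractLeft (fr n r)).comp
      (CliffordAlgebra.contractLeft (gr n r))) (Pl n l)
      = ∑ j ∈ Finset.range l.length, ∑ i ∈ Finset.range (l.length - 1),
          (((l.getD j 0) r * (Jmat n).mulVec ((l.eraseIdx j).getD i 0) r) * (-1:ℂ)^(i+j)) •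
            Pl n ((l.eraseIdx j).eraseIdx i) := by
    intro r
    rw [LinearMap.comp_apply, contractLeft_Pl, map_sum]
    refine Finset.sum_congr rfl fun j hj => ?_
    rw [LinearMap.map_smul, contractLeft_Pl, Finset.smul_sum]
    have hlen : (l.eraseIdx j).length = l.length - 1 := by
      rw [List.length_eraseIdx]; simp [Finset.mem_range.mp hj]
    rw [hlen]
    refine Finset.sum_congr rfl fun i hi => ?_
    rw [smul_smul]
    congr 1
    simp only [gr_apply, fr_apply]
    ring
  have e2 : ∀ j i, (∑ r : Fin n ⊕ Fin n,
      (((l.getD j 0) r * (Jmat n).mulVec ((l.eraseIdx j).getD i 0) r) * (-1:ℂ)^(i+j)) •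
        Pl n ((l.eraseIdx j).eraseIdx i))
      = ((-1:ℂ)^(i+j) * om n ((l.eraseIdx j).getD i 0) (l.getD j 0)) •
          Pl n ((l.eraseIdx j).eraseIdx i) := by
    intro j i
    rw [← Finset.sum_smul]
    congr 1
    rw [om_apply, dotProduct, Finset.mul_sum]
    exact Finset.sum_congr rfl fun r _ => by ring
  have step1 : Theta n (Pl n l) = (-(2⁻¹:ℂ)) • ∑ j ∈ Finset.range l.length,
      ∑ i ∈ Finset.range (l.length - 1),
        ((-1:ℂ)^(i+j) * om n ((l.eraseIdx j).getD i 0) (l.getD j 0)) •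
          Pl n ((l.eraseIdx j).eraseIdx i) := by
    rw [Theta, LinearMap.smul_apply, LinearMap.sum_apply]
    congr 1
    calc (∑ r : Fin n ⊕ Fin n, ((CliffordAlgebra.contractLeft (fr n r)).comp
            (CliffordAlgebra.contractLeft (gr n r))) (Pl n l))
        = ∑ r : Fin n ⊕ Fin n, ∑ j ∈ Finset.range l.length, ∑ i ∈ Finset.range (l.length - 1),
            (((l.getD j 0) r * (Jmat n).mulVec ((l.eraseIdx j).getD i 0) r) * (-1:ℂ)^(i+j)) •
              Pl n ((l.eraseIdx j).eraseIdx i) := Finset.sum_congr rfl fun r _ => hcl r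
      _ = ∑ j ∈ Finset.range l.length, ∑ r : Fin n ⊕ Fin n, ∑ i ∈ Finset.range (l.length - 1),
            (((l.getD j 0) r * (Jmat n).mulVec ((l.eraseIdx j).getD i 0) r) * (-1:ℂ)^(i+j)) •
              Pl n ((l.eraseIdx j).eraseIdx i) := Finset.sum_comm
      _ = ∑ j ∈ Finset.range l.length, ∑ i ∈ Finset.range (l.length - 1),
            ∑ r : Fin n ⊕ Fin n,
            (((l.getD j 0) r * (Jmat n).mulVec ((l.eraseIdx j).getD i 0) r) * (-1:ℂ)^(i+j)) •
              Pl n ((l.eraseIdx j).eraseIdx i) :=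
            Finset.sum_congr rfl fun j _ => Finset.sum_comm
      _ = ∑ j ∈ Finset.range l.length, ∑ i ∈ Finset.range (l.length - 1),
            ((-1:ℂ)^(i+j) * om n ((l.eraseIdx j).getD i 0) (l.getD j 0)) •
              Pl n ((l.eraseIdx j).eraseIdx i) :=
            Finset.sum_congr rfl fun j _ => Finset.sum_congr rfl fun i _ => e2 j i
  rw [step1]
  set m := l.length with hm
  set S := ∑ j ∈ Finset.range m, ∑ i ∈ Finset.range j,
      ((-1:ℂ)^(i+j+1) * om n (l.getD i 0) (l.getD j 0)) • Pl n ((l.eraseIdx j).eraseIdx i)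
    with hS
  have split : ∀ j ∈ Finset.range m,
      (∑ i ∈ Finset.range (m - 1),
        ((-1:ℂ)^(i+j) * om n ((l.eraseIdx j).getD i 0) (l.getD j 0)) •
          Pl n ((l.eraseIdx j).eraseIdx i))
      = (∑ i ∈ (Finset.range (m-1)).filter (fun i => i < j),
          ((-1:ℂ)^(i+j) * om n ((l.eraseIdx j).getD i 0) (l.getD j 0)) •
            Pl n ((l.eraseIdx j).eraseIdx i))
        + ∑ i ∈ (Finset.range (m-1)).filter (fun i => ¬ i < j),
            ((-1:ℂ)^(i+j) * om n ((l.eraseIdx j).getD i 0) (l.getD j 0)) •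
              Pl n ((l.eraseIdx j).eraseIdx i) := by
    intro j _
    exact (Finset.sum_filter_add_sum_filter_not _ _ _).symm
  rw [Finset.sum_congr rfl split, Finset.sum_add_distrib]
  have part1 : (∑ j ∈ Finset.range m, ∑ i ∈ (Finset.range (m-1)).filter (fun i => i < j),
      ((-1:ℂ)^(i+j) * om n ((l.eraseIdx j).getD i 0) (l.getD j 0)) •
        Pl n ((l.eraseIdx j).eraseIdx i)) = -S := by
    rw [hS, ← Finset.sum_neg_distrib]
    refine Finset.sum_congr rfl fun j hj => ?_
    have hjm := Finset.mem_range.mp hj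
    have hfil : (Finset.range (m-1)).filter (fun i => i < j) = Finset.range j := by
      ext i; simp only [Finset.mem_filter, Finset.mem_range]; omega
    rw [hfil, ← Finset.sum_neg_distrib]
    refine Finset.sum_congr rfl fun i hi => ?_
    rw [getD_eraseIdx_of_lt l 0 j i (Finset.mem_range.mp hi), ← neg_smul]
    congr 1
    ring
  have hSsum : S = ∑ i ∈ Finset.range (m-1), ∑ j ∈ Finset.range (i+1),
      ((-1:ℂ)^(j+(i+1)+1) * om n (l.getD j 0) (l.getD (i+1) 0)) •
        Pl n ((l.eraseIdx (i+1)).eraseIdx j) := by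
    rcases Nat.eq_zero_or_pos m with hm0 | hm1
    · rw [hS]; rw [hm0]; simp
    · conv_lhs => rw [hS, show m = (m-1)+1 by omega, Finset.sum_range_succ']
      simp only [Finset.range_zero, Finset.sum_empty, add_zero]
  have part2 : (∑ j ∈ Finset.range m, ∑ i ∈ (Finset.range (m-1)).filter (fun i => ¬ i < j),
      ((-1:ℂ)^(i+j) * om n ((l.eraseIdx j).getD i 0) (l.getD j 0)) •
        Pl n ((l.eraseIdx j).eraseIdx i)) = -S := by
    have swap : (∑ j ∈ Finset.range m, ∑ i ∈ (Finset.range (m-1)).filter (fun i => ¬ i < j),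
        ((-1:ℂ)^(i+j) * om n ((l.eraseIdx j).getD i 0) (l.getD j 0)) •
          Pl n ((l.eraseIdx j).eraseIdx i))
        = ∑ i ∈ Finset.range (m-1), ∑ j ∈ Finset.range (i+1),
            ((-1:ℂ)^(i+j) * om n ((l.eraseIdx j).getD i 0) (l.getD j 0)) •
              Pl n ((l.eraseIdx j).eraseIdx i) := by
      calc (∑ j ∈ Finset.range m, ∑ i ∈ (Finset.range (m-1)).filter (fun i => ¬ i < j),
          ((-1:ℂ)^(i+j) * om n ((l.eraseIdx j).getD i 0) (l.getD j 0)) •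
            Pl n ((l.eraseIdx j).eraseIdx i))
          = ∑ j ∈ Finset.range m, ∑ i ∈ Finset.range (m-1),
              if ¬ i < j then ((-1:ℂ)^(i+j) * om n ((l.eraseIdx j).getD i 0) (l.getD j 0)) •
                Pl n ((l.eraseIdx j).eraseIdx i) else 0 :=
            Finset.sum_congr rfl fun j _ => Finset.sum_filter _ _
        _ = ∑ i ∈ Finset.range (m-1), ∑ j ∈ Finset.range m,
              if ¬ i < j then ((-1:ℂ)^(i+j) * om n ((l.eraseIdx j).getD i 0) (l.getD j 0)) •
                Pl n ((l.eraseIdx j).eraseIdx i) else 0 := Finset.sum_comm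
        _ = ∑ i ∈ Finset.range (m-1), ∑ j ∈ Finset.range (i+1),
              ((-1:ℂ)^(i+j) * om n ((l.eraseIdx j).getD i 0) (l.getD j 0)) •
                Pl n ((l.eraseIdx j).eraseIdx i) := by
            refine Finset.sum_congr rfl fun i hi => ?_
            have him := Finset.mem_range.mp hi
            rw [← Finset.sum_filter]
            congr 1
            ext j; simp only [Finset.mem_filter, Finset.mem_range]; omega
    rw [swap, hSsum, ← Finset.sum_neg_distrib]
    refine Finset.sum_congr rfl fun i hi => ?_
    rw [← Finset.sum_neg_distrib]
    refine Finset.sum_congr rfl fun j hj => ?_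
    have hji : j ≤ i := by have := Finset.mem_range.mp hj; omega
    rw [getD_eraseIdx_of_ge l 0 j i hji, eraseIdx_eraseIdx l i j hji,
      om_skew (l.getD (i+1) 0), ← neg_smul]
    congr 1
    have hpow : (-1:ℂ)^(j+(i+1)+1) = (-1:ℂ)^(i+j) := by
      have he : j+(i+1)+1 = (i+j)+2 := by omega
      rw [he, pow_add]; norm_num
    rw [hpow]; ring
  rw [part1, part2]
  module


theorem Theta_wedge {p : ℕ} (v : Fin p → Vn n) :
    Theta n (wedge n v) = contraction n v := by
  classical
  have hw : wedge n v = Pl n (List.ofFn v) := rfl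
  set l := List.ofFn v with hl
  have hlen : l.length = p := List.length_ofFn
  have hget : ∀ (i : Fin p), l.getD i.val 0 = v i := by
    intro i
    have hi : (i : ℕ) < l.length := by rw [hlen]; exact i.isLt
    rw [List.getD_eq_getElem l 0 hi]
    simp only [hl, List.getElem_ofFn, Fin.eta]
  have hprod : ∀ i j : ℕ, ((((List.ofFn v).map (ExteriorAlgebra.ι ℂ)).eraseIdx j).eraseIdx i).prod
      = Pl n ((l.eraseIdx j).eraseIdx i) := by
    intro i j
    rw [← hl, Pl, eraseIdx_map, eraseIdx_map]
  set G : ℕ → ℕ → ExteriorAlgebra ℂ (Vn n) := fun i j =>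
    ((-1:ℂ)^(i+j+1) * om n (l.getD i 0) (l.getD j 0)) • Pl n ((l.eraseIdx j).eraseIdx i)
    with hG
  have hc : contraction n v = ∑ i ∈ Finset.range p, ∑ j ∈ Finset.range p,
      if i < j then G i j else 0 := by
    rw [contraction,
      ← Fin.sum_univ_eq_sum_range (fun i => ∑ j ∈ Finset.range p, if i < j then G i j else 0) p]
    refine Finset.sum_congr rfl fun i _ => ?_
    rw [← Fin.sum_univ_eq_sum_range (fun j => if (i:ℕ) < j then G (i:ℕ) j else 0) p]
    refine Finset.sum_congr rfl fun j _ => ?_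
    by_cases h : i < j
    · rw [if_pos h, if_pos (show (i:ℕ) < (j:ℕ) from h)]
      rw [hG]
      simp only []
      rw [hget i, hget j, hprod]
      rfl
    · rw [if_neg h, if_neg (show ¬ (i:ℕ) < (j:ℕ) from h)]
  rw [hw, Theta_Pl, hlen, hc]
  exact (calc (∑ i ∈ Finset.range p, ∑ j ∈ Finset.range p, if i < j then G i j else 0)
      = ∑ j ∈ Finset.range p, ∑ i ∈ Finset.range p, if i < j then G i j else 0 :=
        Finset.sum_comm
    _ = ∑ j ∈ Finset.range p, ∑ i ∈ (Finset.range p).filter (fun i => i < j), G i j :=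
        Finset.sum_congr rfl fun j _ => (Finset.sum_filter _ _).symm
    _ = ∑ j ∈ Finset.range p, ∑ i ∈ Finset.range j, G i j := by
        refine Finset.sum_congr rfl fun j hj => ?_
        have := Finset.mem_range.mp hj
        congr 1
        ext i; simp only [Finset.mem_filter, Finset.mem_range]; omega).symm

theorem Pl_mem (l : List (Vn n)) : Pl n l ∈ ⋀[ℂ]^(l.length) (Vn n) := by
  have h : Pl n l = ExteriorAlgebra.ιMulti ℂ l.length (fun i => l[(i:ℕ)]) := by
    rw [ExteriorAlgebra.ιMulti_apply, Pl]
    congr 1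
    rw [show (List.ofFn fun i : Fin l.length => ExteriorAlgebra.ι ℂ l[(i:ℕ)])
        = List.map (ExteriorAlgebra.ι ℂ) (List.ofFn fun i : Fin l.length => l[(i:ℕ)]) by
      rw [List.map_ofFn]; rfl]
    rw [List.ofFn_getElem]
  rw [h]
  exact ExteriorAlgebra.ιMulti_range ℂ _ ⟨_, rfl⟩

theorem wedge_eq_ιMulti {p : ℕ} (v : Fin p → Vn n) :
    wedge n v = ExteriorAlgebra.ιMulti ℂ p v := by
  rw [ExteriorAlgebra.ιMulti_apply, wedge, List.map_ofFn]; rfl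

theorem contractLeft_mem {p : ℕ} (f : Module.Dual ℂ (Vn n)) {x : ExteriorAlgebra ℂ (Vn n)}
    (hx : x ∈ ⋀[ℂ]^p (Vn n)) :
    CliffordAlgebra.contractLeft f x ∈ ⋀[ℂ]^(p-1) (Vn n) := by
  rw [← ExteriorAlgebra.ιMulti_span_fixedDegree] at hx
  induction hx using Submodule.span_induction with
  | mem w h =>
    obtain ⟨v, rfl⟩ := h
    rw [← wedge_eq_ιMulti, show wedge n v = Pl n (List.ofFn v) from rfl, contractLeft_Pl]
    refine Submodule.sum_mem _ fun i hi => Submodule.smul_mem _ _ ?_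
    have him : i < p := by
      have := Finset.mem_range.mp hi
      rwa [List.length_ofFn] at this
    have h2 := Pl_mem (n := n) ((List.ofFn v).eraseIdx i)
    rwa [List.length_eraseIdx, List.length_ofFn, if_pos him] at h2
  | zero => rw [map_zero]; exact Submodule.zero_mem _
  | add a b _ _ ha hb => rw [map_add]; exact Submodule.add_mem _ ha hb
  | smul c a _ ha => rw [LinearMap.map_smul]; exact Submodule.smul_mem _ c ha

theorem mul_ι_mem {p : ℕ} (b : Vn n) {x : ExteriorAlgebra ℂ (Vn n)}
    (hx : x ∈ ⋀[ℂ]^p (Vn n)) :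
    ExteriorAlgebra.ι ℂ b * x ∈ ⋀[ℂ]^(p+1) (Vn n) := by
  rw [← ExteriorAlgebra.ιMulti_span_fixedDegree] at hx
  induction hx using Submodule.span_induction with
  | mem w h =>
    obtain ⟨v, rfl⟩ := h
    rw [← wedge_eq_ιMulti, show wedge n v = Pl n (List.ofFn v) from rfl, ← Pl_cons]
    have h2 := Pl_mem (n := n) (b :: List.ofFn v)
    rwa [List.length_cons, List.length_ofFn] at h2
  | zero => rw [mul_zero]; exact Submodule.zero_mem _
  | add a c _ _ ha hc => rw [mul_add]; exact Submodule.add_mem _ ha hc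
  | smul c a _ ha => rw [mul_smul_comm]; exact Submodule.smul_mem _ c ha

theorem Theta_mul (u : Vn n) (z : ExteriorAlgebra ℂ (Vn n)) :
    Theta n (ExteriorAlgebra.ι ℂ u * z)
      = ExteriorAlgebra.ι ℂ u * Theta n z + CliffordAlgebra.contractLeft (om n u) z := by
  have hterm : ∀ r, ((CliffordAlgebra.contractLeft (fr n r)).comp
      (CliffordAlgebra.contractLeft (gr n r))) (ExteriorAlgebra.ι ℂ u * z)
      = gr n r u • (CliffordAlgebra.contractLeft (fr n r)) z
        - fr n r u • (CliffordAlgebra.contractLeft (gr n r)) z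
        + ExteriorAlgebra.ι ℂ u * ((CliffordAlgebra.contractLeft (fr n r))
            ((CliffordAlgebra.contractLeft (gr n r)) z)) := by
    intro r
    rw [LinearMap.comp_apply, CliffordAlgebra.contractLeft_ι_mul, map_sub, LinearMap.map_smul,
      CliffordAlgebra.contractLeft_ι_mul]
    abel
  have h1 : (∑ r : Fin n ⊕ Fin n, gr n r u • (CliffordAlgebra.contractLeft (fr n r)) z)
      = -((CliffordAlgebra.contractLeft (om n u)) z) := by
    have hf1 : (∑ r : Fin n ⊕ Fin n, u r • fr n r) = -(om n u) := by
      refine LinearMap.ext fun w => ?_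
      rw [LinearMap.sum_apply, LinearMap.neg_apply, om_apply]
      have he : ∀ r, (u r • fr n r) w = u r * (Jmat n).mulVec w r := fun r => rfl
      rw [Finset.sum_congr rfl fun r _ => he r,
        show (∑ r, u r * (Jmat n).mulVec w r) = u ⬝ᵥ (Jmat n).mulVec w from rfl,
        dotProduct_comm, Jskew]
    calc (∑ r : Fin n ⊕ Fin n, gr n r u • (CliffordAlgebra.contractLeft (fr n r)) z)
        = (CliffordAlgebra.contractLeft (∑ r : Fin n ⊕ Fin n, u r • fr n r)) z := by
          rw [map_sum]
          rw [LinearMap.sum_apply]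
          exact Finset.sum_congr rfl fun r _ => by
            rw [LinearMap.map_smul, LinearMap.smul_apply]; rfl
      _ = -((CliffordAlgebra.contractLeft (om n u)) z) := by
          rw [hf1, map_neg, LinearMap.neg_apply]
  have h2 : (∑ r : Fin n ⊕ Fin n, fr n r u • (CliffordAlgebra.contractLeft (gr n r)) z)
      = (CliffordAlgebra.contractLeft (om n u)) z := by
    have hf2 : (∑ r : Fin n ⊕ Fin n, (Jmat n).mulVec u r • gr n r) = om n u := by
      refine LinearMap.ext fun w => ?_
      rw [LinearMap.sum_apply, om_apply]
      have he : ∀ r, ((Jmat n).mulVec u r • gr n r) w = (Jmat n).mulVec u r * w r := fun r => rfl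
      rw [Finset.sum_congr rfl fun r _ => he r]
      rfl
    calc (∑ r : Fin n ⊕ Fin n, fr n r u • (CliffordAlgebra.contractLeft (gr n r)) z)
        = (CliffordAlgebra.contractLeft (∑ r : Fin n ⊕ Fin n, (Jmat n).mulVec u r • gr n r)) z := by
          rw [map_sum, LinearMap.sum_apply]
          exact Finset.sum_congr rfl fun r _ => by
            rw [LinearMap.map_smul, LinearMap.smul_apply]; rfl
      _ = (CliffordAlgebra.contractLeft (om n u)) z := by rw [hf2]
  rw [Theta, LinearMap.smul_apply, LinearMap.sum_apply,
    Finset.sum_congr rfl fun r _ => hterm r, Finset.sum_add_distrib, Finset.sum_sub_distrib,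
    h1, h2, ← Finset.mul_sum, LinearMap.smul_apply, LinearMap.sum_apply,
    Finset.sum_congr rfl fun r (_ : r ∈ Finset.univ) => LinearMap.comp_apply _ _ _]
  rw [mul_smul_comm]
  module

theorem Theta_contract_comm (f : Module.Dual ℂ (Vn n)) (z : ExteriorAlgebra ℂ (Vn n)) :
    CliffordAlgebra.contractLeft f (Theta n z) = Theta n (CliffordAlgebra.contractLeft f z) := by
  rw [Theta, LinearMap.smul_apply, LinearMap.sum_apply, LinearMap.map_smul, map_sum,
    LinearMap.smul_apply, LinearMap.sum_apply]
  congr 1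
  refine Finset.sum_congr rfl fun r _ => ?_
  rw [LinearMap.comp_apply, LinearMap.comp_apply,
    CliffordAlgebra.contractLeft_comm f (fr n r),
    CliffordAlgebra.contractLeft_comm f (gr n r), map_neg, neg_neg]

theorem contractLeft_mul (d : Module.Dual ℂ (Vn n)) (a b : ExteriorAlgebra ℂ (Vn n)) :
    CliffordAlgebra.contractLeft d (a * b)
      = CliffordAlgebra.contractLeft d a * b
        + CliffordAlgebra.involute a * CliffordAlgebra.contractLeft d b := by
  induction a using CliffordAlgebra.induction generalizing b with
  | algebraMap r =>
    rw [CliffordAlgebra.contractLeft_algebraMap_mul, CliffordAlgebra.contractLeft_algebraMap,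
      zero_mul, zero_add, AlgHom.commutes, ← Algebra.smul_def]
  | ι m =>
    rw [CliffordAlgebra.contractLeft_ι_mul, CliffordAlgebra.contractLeft_ι,
      CliffordAlgebra.involute_ι, ← Algebra.smul_def, sub_eq_add_neg, neg_mul]
  | mul a1 a2 ih1 ih2 =>
    rw [mul_assoc, ih1, ih2, ih1 a2, _root_.map_mul]
    noncomm_ring
  | add a1 a2 ih1 ih2 =>
    rw [add_mul, map_add, ih1, ih2, map_add, map_add, add_mul, add_mul]
    abel

theorem D_eq (α : Vn n) (D : ExteriorAlgebra ℂ (Vn n) →ₗ[ℂ] ExteriorAlgebra ℂ (Vn n))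
    (hD1 : ∀ a b, D (a * b) = D a * b + a * D b)
    (hD2 : ∀ u : Vn n, D (ExteriorAlgebra.ι ℂ u) = om n α u • ExteriorAlgebra.ι ℂ α) (z) :
    D z = ExteriorAlgebra.ι ℂ α * CliffordAlgebra.contractLeft (om n α) z := by
  have hD0 : D 1 = 0 := by
    have h := hD1 1 1
    simp only [mul_one, one_mul] at h
    exact add_eq_left.mp h.symm
  suffices h : ∀ z, (D z = ExteriorAlgebra.ι ℂ α * CliffordAlgebra.contractLeft (om n α) z)
      ∧ (ExteriorAlgebra.ι ℂ α * CliffordAlgebra.involute z = z * ExteriorAlgebra.ι ℂ α) by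
    exact (h z).1
  intro z
  induction z using CliffordAlgebra.induction with
  | algebraMap r =>
    constructor
    · rw [Algebra.algebraMap_eq_smul_one, LinearMap.map_smul, hD0, smul_zero,
        LinearMap.map_smul, CliffordAlgebra.contractLeft_one, smul_zero, mul_zero]
    · rw [AlgHom.commutes, Algebra.commutes]
  | ι m =>
    constructor
    · rw [hD2, CliffordAlgebra.contractLeft_ι, ← Algebra.commutes, ← Algebra.smul_def]
    · rw [CliffordAlgebra.involute_ι, mul_neg]
      exact neg_eq_of_add_eq_zero_right (ExteriorAlgebra.ι_add_mul_swap α m)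
  | mul a b ha hb =>
    constructor
    · rw [hD1, ha.1, hb.1, contractLeft_mul, mul_add]
      congr 1
      · rw [mul_assoc]
      · rw [← mul_assoc, ← ha.2, mul_assoc]
    · rw [_root_.map_mul, ← mul_assoc, ha.2, mul_assoc, hb.2, ← mul_assoc]
  | add a b ha hb =>
    constructor
    · rw [map_add, ha.1, hb.1, map_add, mul_add]
    · rw [map_add, mul_add, add_mul, ha.2, hb.2]

end WWaux

set_option maxHeartbeats 1000000 in
/-- Let `β ∈ ℂ^N`, `k ∈ ℤ^N` with `k+β ≠ 0`, `N = 2n`, `1 ≤ p ≤ n`. Every element of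
`(k+β) ∧ Λ^{p-1} ℂ^N` lying in the kernel of the contraction `θ_p` is of the form
`(k+β)(overline{k+β})^T w` for some `w ∈ ker θ_p`; that is,
`W^{k,β}(V(ω_p)) = W_min^{k,β}(V(ω_p))`. -/
theorem W_eq_Wmin_on_fundamental (n p : ℕ) (hp1 : 1 ≤ p) (hpn : p ≤ n)
    (β : Fin n ⊕ Fin n → ℂ) (k : Fin n ⊕ Fin n → ℤ)
    (hk : (fun i => (k i : ℂ)) + β ≠ 0)
    (θ : ExteriorAlgebra ℂ (Fin n ⊕ Fin n → ℂ) →ₗ[ℂ] ExteriorAlgebra ℂ (Fin n ⊕ Fin n → ℂ))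
    (hθ : ∀ v : Fin p → (Fin n ⊕ Fin n → ℂ), θ (wedge n v) = contraction n v)
    (D : ExteriorAlgebra ℂ (Fin n ⊕ Fin n → ℂ) →ₗ[ℂ] ExteriorAlgebra ℂ (Fin n ⊕ Fin n → ℂ))
    (hD1 : ∀ a b, D (a * b) = D a * b + a * D b)
    (hD2 : ∀ u : Fin n ⊕ Fin n → ℂ, D (ExteriorAlgebra.ι ℂ u) =
      ExteriorAlgebra.ι ℂ
        ((Matrix.vecMulVec ((fun i => (k i : ℂ)) + β)
          ((Jmat n).mulVec ((fun i => (k i : ℂ)) + β))).mulVec u)) :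
    ∀ x ∈ ⋀[ℂ]^p (Fin n ⊕ Fin n → ℂ), θ x = 0 →
      (∃ y ∈ ⋀[ℂ]^(p-1) (Fin n ⊕ Fin n → ℂ),
        x = ExteriorAlgebra.ι ℂ ((fun i => (k i : ℂ)) + β) * y) →
      ∃ w ∈ ⋀[ℂ]^p (Fin n ⊕ Fin n → ℂ), θ w = 0 ∧ D w = x := by
  classical
  intro x hxp hθx hex
  set α : Fin n ⊕ Fin n → ℂ := (fun i => (k i : ℂ)) + β with hα
  have hJα : (Jmat n).mulVec α ≠ 0 := fun h => hk (WWaux.Jinj h)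
  obtain ⟨r, hr⟩ : ∃ r, (Jmat n).mulVec α r ≠ 0 := by
    by_contra h
    push_neg at h
    exact hJα (funext h)
  set b : Fin n ⊕ Fin n → ℂ := ((Jmat n).mulVec α r)⁻¹ • (Pi.single r 1 : Fin n ⊕ Fin n → ℂ) with hb
  have hφb : WWaux.om n α b = 1 := by
    rw [WWaux.om_apply, hb, dotProduct_smul, dotProduct_single, mul_one,
      smul_eq_mul, inv_mul_cancel₀ hr]
  have hψα : WWaux.om n b α = -1 := by rw [WWaux.om_skew, hφb]
  have hD2' : ∀ u : Fin n ⊕ Fin n → ℂ, D (ExteriorAlgebra.ι ℂ u)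
      = WWaux.om n α u • ExteriorAlgebra.ι ℂ α := by
    intro u
    rw [hD2 u, WWaux.vecMulVec_mulVec, LinearMap.map_smul]
    rfl
  have hθΘ : ∀ z, z ∈ ⋀[ℂ]^p (Fin n ⊕ Fin n → ℂ) → θ z = WWaux.Theta n z := by
    intro z hz
    rw [← ExteriorAlgebra.ιMulti_span_fixedDegree] at hz
    induction hz using Submodule.span_induction with
    | mem w h =>
      obtain ⟨v, rfl⟩ := h
      rw [← WWaux.wedge_eq_ιMulti, hθ v, WWaux.Theta_wedge v]
    | zero => rw [map_zero, map_zero]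
    | add a c _ _ ha hc => rw [map_add, map_add, ha, hc]
    | smul t a _ ha => rw [LinearMap.map_smul, LinearMap.map_smul, ha]
  have hΘx : WWaux.Theta n x = 0 := by rw [← hθΘ x hxp]; exact hθx
  obtain ⟨y0, hy0mem, hxy0⟩ := hex
  have hax : ExteriorAlgebra.ι ℂ α * x = 0 := by
    rw [hxy0, ← mul_assoc, ExteriorAlgebra.ι_sq_zero, zero_mul]
  set y : ExteriorAlgebra ℂ (Fin n ⊕ Fin n → ℂ)
    := -(CliffordAlgebra.contractLeft (WWaux.om n b) x) with hy
  have hxy : x = ExteriorAlgebra.ι ℂ α * y := by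
    have h0 := CliffordAlgebra.contractLeft_ι_mul (WWaux.om n b) α x
    rw [hax, map_zero, hψα, neg_one_smul] at h0
    have h1 : x + ExteriorAlgebra.ι ℂ α * CliffordAlgebra.contractLeft (WWaux.om n b) x = 0 := by
      have h2 := congrArg (fun t => -t) h0
      simp only [neg_zero, neg_sub, sub_neg_eq_add] at h2
      rw [add_comm]
      exact h2.symm
    rw [hy, mul_neg]
    exact eq_neg_of_add_eq_zero_left h1
  have hψy : CliffordAlgebra.contractLeft (WWaux.om n b) y = 0 := by
    rw [hy, map_neg, CliffordAlgebra.contractLeft_contractLeft, neg_zero]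
  have hkey : CliffordAlgebra.contractLeft (WWaux.om n α) y
      = -(ExteriorAlgebra.ι ℂ α * WWaux.Theta n y) := by
    have h2 := WWaux.Theta_mul α y
    rw [← hxy, hΘx] at h2
    have h3 : CliffordAlgebra.contractLeft (WWaux.om n α) y
        + ExteriorAlgebra.ι ℂ α * WWaux.Theta n y = 0 := by
      rw [add_comm]; exact h2.symm
    exact eq_neg_of_add_eq_zero_left h3
  have hΘy : WWaux.Theta n y = 0 := by
    have hψΘy : CliffordAlgebra.contractLeft (WWaux.om n b) (WWaux.Theta n y) = 0 := by
      rw [WWaux.Theta_contract_comm, hψy, map_zero]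
    have h4 := CliffordAlgebra.contractLeft_ι_mul (WWaux.om n b) α (WWaux.Theta n y)
    have h5 : ExteriorAlgebra.ι ℂ α * WWaux.Theta n y
        = -(CliffordAlgebra.contractLeft (WWaux.om n α) y) := by
      rw [hkey, neg_neg]
    rw [h5, map_neg, CliffordAlgebra.contractLeft_comm (WWaux.om n b) (WWaux.om n α) y,
      neg_neg, hψy, map_zero, hψα, neg_one_smul, hψΘy, mul_zero, sub_zero] at h4
    exact neg_eq_zero.mp h4.symm
  have hφy : CliffordAlgebra.contractLeft (WWaux.om n α) y = 0 := by
    rw [hkey, hΘy, mul_zero, neg_zero]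
  have hymem : y ∈ ⋀[ℂ]^(p-1) (Fin n ⊕ Fin n → ℂ) := by
    rw [hy]
    exact Submodule.neg_mem _ (WWaux.contractLeft_mem _ hxp)
  have hwmem : ExteriorAlgebra.ι ℂ b * y ∈ ⋀[ℂ]^p (Fin n ⊕ Fin n → ℂ) := by
    have h6 := WWaux.mul_ι_mem b hymem
    rwa [show p - 1 + 1 = p by omega] at h6
  refine ⟨ExteriorAlgebra.ι ℂ b * y, hwmem, ?_, ?_⟩
  · rw [hθΘ _ hwmem, WWaux.Theta_mul b y, hΘy, mul_zero, zero_add, hψy]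
  · rw [WWaux.D_eq α D hD1 hD2' (ExteriorAlgebra.ι ℂ b * y),
      CliffordAlgebra.contractLeft_ι_mul, hφb, one_smul, hφy, mul_zero, sub_zero, ← hxy]
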